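/- The map v_4 sending a Gauss word w to the mod-2 count of subwords of w isomorphic to one of the six Gauss words ABACDCBD, ABCACDBD, ABCADBDC, ABCBDACD, ABCDBDAC, ABCDCADB is invariant under the homotopy move H1: xAAy ↔ xy. -/

import Mathlib

attribute [local instance] Classical.propDecidable

/-!
Gauss words are modelled as lists of letters (natural numbers) in which every
letter appearing does so exactly twice.  Subwords are obtained by restriction to a
subset of the letters; isomorphism is a bijective renaming of letters.
-/

def lettersOf (w : List ℕ) : Finset ℕ := w.toFinset

def rank (w : List ℕ) : ℕ := (lettersOf w).card

def IsGauss (w : List ℕ) : Prop := ∀ x ∈ w, w.count x = 2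

/-- The subword of `w` consisting of the letters in `T`. -/
def restrict (w : List ℕ) (T : Finset ℕ) : List ℕ := w.filter (fun x => decide (x ∈ T))

/-- Isomorphism of Gauss words: a bijective renaming of letters. -/
def Iso (v w : List ℕ) : Prop := ∃ σ : ℕ ≃ ℕ, v.map σ = w

/-- The number of subwords of `w` isomorphic to `q`. -/
noncomputable def bracketN (q w : List ℕ) : ℕ :=
  ((lettersOf w).powerset.filter (fun T => Iso (restrict w T) q)).card

/-- The homotopy moves H1, H2, H3 on Gauss words. -/
inductive HMove : List ℕ → List ℕ → Prop
  | h1 (x y : List ℕ) (A : ℕ) : HMove (x ++ [A, A] ++ y) (x ++ y)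
  | h2 (x y z : List ℕ) (A B : ℕ) :
      HMove (x ++ [A, B] ++ y ++ [B, A] ++ z) (x ++ y ++ z)
  | h3 (x y z t : List ℕ) (A B C : ℕ) :
      HMove (x ++ [A, B] ++ y ++ [A, C] ++ z ++ [B, C] ++ t)
            (x ++ [B, A] ++ y ++ [C, A] ++ z ++ [C, B] ++ t)

/-- Homotopy of Gauss words: generated by isomorphism and the moves H1, H2, H3. -/
def Homotopic : List ℕ → List ℕ → Prop :=
  Relation.EqvGen (fun v w => HMove v w ∨ Iso v w)

-- The six rank-4 Gauss words (letters A,B,C,D as 0,1,2,3).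
def w1 : List ℕ := [0,1,0,2,3,2,1,3]  -- ABACDCBD
def w2 : List ℕ := [0,1,2,0,2,3,1,3]  -- ABCACDBD
def w3 : List ℕ := [0,1,2,0,3,1,3,2]  -- ABCADBDC
def w4 : List ℕ := [0,1,2,1,3,0,2,3]  -- ABCBDACD
def w5 : List ℕ := [0,1,2,3,1,3,0,2]  -- ABCDBDAC
def w6 : List ℕ := [0,1,2,3,2,0,3,1]  -- ABCDCADB

/-- `v₄(w)`: the mod-2 count of subwords of `w` isomorphic to one of `w₁,…,w₆`. -/
noncomputable def v4 (w : List ℕ) : ZMod 2 :=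
  ((bracketN w1 w + bracketN w2 w + bracketN w3 w
    + bracketN w4 w + bracketN w5 w + bracketN w6 w : ℕ) : ZMod 2)

lemma noAdj_of_iso {v q : List ℕ} (hq : q.Chain' (· ≠ ·)) (h : Iso v q) :
    v.Chain' (· ≠ ·) := by
  obtain ⟨σ, hσ⟩ := h
  unfold List.Chain' at hq ⊢
  rw [← hσ, List.isChain_map] at hq
  exact hq.imp (fun a b hab e => hab (by rw [e]))

lemma bracket_eq (q x y : List ℕ) (A : ℕ) (hq : q.Chain' (· ≠ ·))
    (hA : A ∉ x ++ y) :
    bracketN q (x ++ [A, A] ++ y) = bracketN q (x ++ y) := by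
  unfold bracketN
  congr 1
  apply Finset.ext
  intro T
  simp only [Finset.mem_filter, Finset.mem_powerset]
  constructor
  · rintro ⟨hsub, hiso⟩
    by_cases hAT : A ∈ T
    · exfalso
      have hr : restrict (x ++ [A, A] ++ y) T
          = restrict x T ++ [A, A] ++ restrict y T := by
        simp [restrict, List.filter_append, hAT]
      rw [hr] at hiso
      have hc := noAdj_of_iso hq hiso
      have hi : [A, A] <:+: (restrict x T ++ [A, A] ++ restrict y T) :=
        ⟨restrict x T, restrict y T, by simp⟩
      have := hc.infix hi
      simp at this
    · refine ⟨?_, ?_⟩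
      · intro a ha
        have hm := hsub ha
        simp [lettersOf] at hm ⊢
        rcases hm with h1 | h1 | h1
        · exact absurd (h1 ▸ ha) hAT
        · exact Or.inl h1
        · exact Or.inr h1
      · have hr : restrict (x ++ [A, A] ++ y) T = restrict (x ++ y) T := by
          simp [restrict, List.filter_append, hAT]
        rwa [hr] at hiso
  · rintro ⟨hsub, hiso⟩
    have hAT : A ∉ T := by
      intro hc
      have hm := hsub hc
      simp [lettersOf] at hm
      exact hA (by simpa using List.mem_append.mpr hm)
    refine ⟨?_, ?_⟩
    · intro a ha
      have hm := hsub ha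
      simp [lettersOf] at hm ⊢
      tauto
    · have hr : restrict (x ++ [A, A] ++ y) T = restrict (x ++ y) T := by
        simp [restrict, List.filter_append, hAT]
      rwa [hr]

/-- `v₄` is invariant under the homotopy move H1: `xAAy ↔ xy`. -/
theorem v4_invariant_H1 (x y : List ℕ) (A : ℕ)
    (h : IsGauss (x ++ [A, A] ++ y)) :
    v4 (x ++ [A, A] ++ y) = v4 (x ++ y) := by
  have hA : A ∉ x ++ y := by
    intro hmem
    have h2 : (x ++ [A, A] ++ y).count A = 2 := h A (by simp)
    rw [List.count_append, List.count_append] at h2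
    have h22 : ([A, A] : List ℕ).count A = 2 := by simp
    rw [h22] at h2
    rcases List.mem_append.mp hmem with hx | hx
    · have := List.count_pos_iff.mpr hx; omega
    · have := List.count_pos_iff.mpr hx; omega
  unfold v4
  rw [bracket_eq w1 x y A (by simp [w1, List.Chain', List.isChain_cons_cons]) hA, bracket_eq w2 x y A (by simp [w2, List.Chain', List.isChain_cons_cons]) hA,
    bracket_eq w3 x y A (by simp [w3, List.Chain', List.isChain_cons_cons]) hA, bracket_eq w4 x y A (by simp [w4, List.Chain', List.isChain_cons_cons]) hA,
    bracket_eq w5 x y A (by simp [w5, List.Chain', List.isChain_cons_cons]) hA, bracket_eq w6 x y A (by simp [w6, List.Chain', List.isChain_cons_cons]) hA]
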